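/- The function f satisfies |f(t)| ≤ 2^(1/4) |t|^(1/2) for all real t. -/

import Mathlib

theorem stmt_1 (f : ℝ → ℝ) (hf0 : f 0 = 0) (hodd : ∀ t : ℝ, f (-t) = -f t)
    (hf1 : ∀ t : ℝ, 0 ≤ t → HasDerivAt f ((1 + 2 * f t ^ 2) ^ (-(1/2) : ℝ)) t) :
    ∀ t : ℝ, |f t| ≤ (2 : ℝ) ^ ((1:ℝ)/4) * |t| ^ ((1:ℝ)/2) := by
  have key : ∀ t : ℝ, 0 ≤ t → |f t| ≤ (2:ℝ) ^ ((1:ℝ)/4) * t ^ ((1:ℝ)/2) := by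
    intro t ht
    have hderiv : ∀ s ∈ Set.Icc (0:ℝ) t, HasDerivWithinAt (fun s => f s ^ 2)
        (2 * f s * ((1 + 2 * f s ^ 2) ^ (-(1/2):ℝ))) (Set.Icc (0:ℝ) t) s := by
      intro s hs
      have h := ((hf1 s hs.1).pow 2).hasDerivWithinAt (s := Set.Icc (0:ℝ) t)
      refine HasDerivWithinAt.congr_deriv h ?_
      push_cast
      ring
    have hbound : ∀ s ∈ Set.Icc (0:ℝ) t,
        ‖2 * f s * ((1 + 2 * f s ^ 2) ^ (-(1/2):ℝ))‖ ≤ Real.sqrt 2 := by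
      intro s _
      set y := f s
      have hA : (0:ℝ) < 1 + 2 * y ^ 2 := by positivity
      have hpow : (1 + 2 * y ^ 2 : ℝ) ^ (-(1/2):ℝ) = (Real.sqrt (1 + 2 * y ^ 2))⁻¹ := by
        rw [Real.rpow_neg hA.le, Real.sqrt_eq_rpow]
      rw [hpow, Real.norm_eq_abs, abs_mul, abs_inv,
        abs_of_nonneg (Real.sqrt_nonneg _)]
      rw [inv_eq_one_div, mul_comm, div_mul_eq_mul_div, div_le_iff₀ (by positivity), one_mul]
      have h1 : |2 * y| = Real.sqrt (4 * y ^ 2) := by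
        rw [show (4:ℝ) * y ^ 2 = (2*y)^2 by ring, Real.sqrt_sq_eq_abs]
      rw [h1, ← Real.sqrt_mul (by norm_num)]
      exact Real.sqrt_le_sqrt (by nlinarith)
    have hmvt := norm_image_sub_le_of_norm_deriv_le_segment' hderiv (fun s hs => hbound s (Set.mem_Icc_of_Ico hs)) t
      (Set.right_mem_Icc.mpr ht)
    rw [hf0] at hmvt
    simp only [Real.norm_eq_abs, sub_zero] at hmvt
    have hsq : f t ^ 2 ≤ Real.sqrt 2 * t := by
      have h := (abs_le.mp hmvt).2; nlinarith
    have h2 : |f t| ≤ Real.sqrt (Real.sqrt 2 * t) := by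
      rw [show f t ^ 2 = |f t| ^ 2 by rw [sq_abs]] at hsq
      exact (Real.le_sqrt (abs_nonneg _) (by positivity)).mpr hsq
    refine h2.trans (le_of_eq ?_)
    rw [Real.sqrt_mul (Real.sqrt_nonneg _), Real.sqrt_eq_rpow t,
      Real.sqrt_eq_rpow 2, Real.sqrt_eq_rpow,
      ← Real.rpow_mul (by norm_num : (0:ℝ) ≤ 2)]
    norm_num
  intro t
  rcases le_or_gt 0 t with ht | ht
  · rw [abs_of_nonneg ht]; exact key t ht
  · have h := key (-t) (by linarith)
    have : f t = -f (-t) := by rw [hodd t] at *; rw [← neg_neg t, hodd, neg_neg]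
    rw [abs_of_neg ht]
    calc |f t| = |f (-t)| := by rw [this, abs_neg]
    _ ≤ _ := h
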